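/- The probability that a uniformly random n×n symmetric matrix over F_2 has rank at most n−s is at most 2^{s·log₂(n) − C(s,2)}, where C(s,2) = s(s−1)/2. -/

import Mathlib

open Matrix Finset

def symmEquiv (α : Type*) [Fintype α] [LinearOrder α] :
    {M : Matrix α α (ZMod 2) // M.IsSymm} ≃ ({p : α × α // p.1 ≤ p.2} → ZMod 2) where
  toFun M p := M.1 p.1.1 p.1.2
  invFun f := ⟨fun i j => if h : i ≤ j then f ⟨(i, j), h⟩ else f ⟨(j, i), le_of_not_ge h⟩, by
    apply Matrix.IsSymm.ext
    intro i j
    by_cases h : i ≤ j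
    · by_cases h' : j ≤ i
      · have : i = j := le_antisymm h h'
        subst this; rfl
      · simp [h, h']
    · have h' : j ≤ i := le_of_not_ge h
      simp [h, h']⟩
  left_inv M := by
    ext i j
    dsimp
    by_cases h : i ≤ j
    · simp [h]
    · simp [h, M.2.apply]
  right_inv f := by
    funext p
    simp only []
    rw [dif_pos p.2]
  
lemma card_symm (α : Type*) [Fintype α] [LinearOrder α] :
    Nat.card {M : Matrix α α (ZMod 2) // M.IsSymm} =
      2 ^ (Fintype.card α * (Fintype.card α + 1) / 2) := by
  rw [Nat.card_congr (symmEquiv α), Nat.card_eq_fintype_card, Fintype.card_fun,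
    Fintype.card_congr (Sym2.sortEquiv (α := α)).symm, Sym2.card]
  have : (Fintype.card α + 1).choose 2 = Fintype.card α * (Fintype.card α + 1) / 2 := by
    rw [Nat.choose_two_right]
    simp [Nat.mul_comm]
  rw [this, ZMod.card]


lemma exists_decomp (n s : ℕ) (hs : s ≤ n) (M : Matrix (Fin n) (Fin n) (ZMod 2))
    (hsym : M.IsSymm) (hrank : M.rank ≤ n - s) :
    ∃ T : Finset (Fin n), T.card = s ∧
      ∃ c : ↥T → ↥Tᶜ → ZMod 2, ∀ (i : ↥T) (j : Fin n),
        M i.1 j = ∑ k : ↥Tᶜ, c i k * M k.1 j := by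
  classical
  obtain ⟨b, hbsub, hbspan, hbind⟩ := exists_linearIndependent (ZMod 2) (Set.range Mᵀ)
  have hbfin : b.Finite := (Set.finite_range _).subset hbsub
  haveI := hbfin.fintype
  have hcard : b.toFinset.card ≤ n - s := by
    rw [← finrank_span_set_eq_card hbind, hbspan]
    rw [Matrix.rank_eq_finrank_span_cols] at hrank
    exact hrank
  have hex : ∀ x : b, ∃ j, Mᵀ j = x.1 := fun x => hbsub x.2
  set g : b → Fin n := fun x => Classical.choose (hex x) with hg
  have hgspec : ∀ x : b, Mᵀ (g x) = x.1 := fun x => Classical.choose_spec (hex x)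
  set S₀ : Finset (Fin n) := Finset.univ.image g with hS₀
  have hS₀card : S₀.card ≤ n - s := by
    calc S₀.card ≤ Fintype.card b := Finset.card_image_le.trans (by simp)
    _ = b.toFinset.card := by simp [Set.toFinset_card]
    _ ≤ n - s := hcard
  obtain ⟨S, hS₀S, hScard⟩ := Finset.exists_superset_card_eq hS₀card (by simp)
  refine ⟨Sᶜ, ?_, ?_⟩
  · rw [Finset.card_compl, hScard, Fintype.card_fin, Nat.sub_sub_self hs]
  rw [compl_compl]
  have hspan : ∀ j, Mᵀ j ∈ Submodule.span (ZMod 2) (Set.range fun k : ↥S => Mᵀ k.1) := by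
    intro j
    have h1 : Mᵀ j ∈ Submodule.span (ZMod 2) b := by
      rw [hbspan]
      exact Submodule.subset_span ⟨j, rfl⟩
    refine Submodule.span_le.2 ?_ h1
    intro x hx
    refine Submodule.subset_span ⟨⟨g ⟨x, hx⟩, hS₀S (Finset.mem_image_of_mem g (Finset.mem_univ _))⟩, ?_⟩
    exact hgspec ⟨x, hx⟩
  have hc : ∀ j, ∃ c : ↥S → ZMod 2, ∑ k, c k • Mᵀ k.1 = Mᵀ j :=
    fun j => (Submodule.mem_span_range_iff_exists_fun (ZMod 2)).1 (hspan j)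
  refine ⟨fun i => Classical.choose (hc i.1), ?_⟩
  intro i j
  have := congrFun (Classical.choose_spec (hc i.1)) j
  simp only [Finset.sum_apply, Pi.smul_apply, smul_eq_mul, Matrix.transpose_apply] at this
  calc M i.1 j = M j i.1 := (hsym.apply _ _).symm
  _ = ∑ k : ↥S, Classical.choose (hc i.1) k * M j k.1 := this.symm
  _ = _ := by
    refine Finset.sum_congr rfl fun k _ => ?_
    rw [hsym.apply]


def recon {n : ℕ} (T : Finset (Fin n)) (c : ↥T → ↥Tᶜ → ZMod 2)
    (A : Matrix ↥Tᶜ ↥Tᶜ (ZMod 2)) : Matrix (Fin n) (Fin n) (ZMod 2) :=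
  Matrix.of fun i j =>
    if hi : i ∈ T then
      if hj : j ∈ T then ∑ k, ∑ l, c ⟨i, hi⟩ k * A k l * c ⟨j, hj⟩ l
      else ∑ k, c ⟨i, hi⟩ k * A k ⟨j, Finset.mem_compl.mpr hj⟩
    else
      if hj : j ∈ T then ∑ l, A ⟨i, Finset.mem_compl.mpr hi⟩ l * c ⟨j, hj⟩ l
      else A ⟨i, Finset.mem_compl.mpr hi⟩ ⟨j, Finset.mem_compl.mpr hj⟩

lemma recon_eq {n : ℕ} (M : Matrix (Fin n) (Fin n) (ZMod 2)) (hsym : M.IsSymm)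
    (T : Finset (Fin n)) (c : ↥T → ↥Tᶜ → ZMod 2)
    (hc : ∀ (i : ↥T) (j : Fin n), M i.1 j = ∑ k : ↥Tᶜ, c i k * M k.1 j) :
    recon T c (Matrix.of fun k l : ↥Tᶜ => M k.1 l.1) = M := by
  funext i j
  show dite _ _ _ = M i j
  by_cases hi : i ∈ T
  · rw [dif_pos hi]
    by_cases hj : j ∈ T
    · rw [dif_pos hj]
      calc ∑ k : ↥Tᶜ, ∑ l : ↥Tᶜ, c ⟨i, hi⟩ k * M k.1 l.1 * c ⟨j, hj⟩ l
          = ∑ k : ↥Tᶜ, c ⟨i, hi⟩ k * (∑ l : ↥Tᶜ, c ⟨j, hj⟩ l * M l.1 k.1) := by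
            refine Finset.sum_congr rfl fun k _ => ?_
            rw [Finset.mul_sum]
            refine Finset.sum_congr rfl fun l _ => ?_
            rw [hsym.apply l.1 k.1]
            ring
        _ = ∑ k : ↥Tᶜ, c ⟨i, hi⟩ k * M j k.1 := by
            refine Finset.sum_congr rfl fun k _ => ?_
            rw [← hc ⟨j, hj⟩ k.1]
        _ = ∑ k : ↥Tᶜ, c ⟨i, hi⟩ k * M k.1 j := by
            refine Finset.sum_congr rfl fun k _ => ?_
            rw [hsym.apply k.1 j]
        _ = M i j := (hc ⟨i, hi⟩ j).symm
    · rw [dif_neg hj]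
      exact (hc ⟨i, hi⟩ j).symm
  · rw [dif_neg hi]
    by_cases hj : j ∈ T
    · rw [dif_pos hj]
      calc ∑ l : ↥Tᶜ, M i l.1 * c ⟨j, hj⟩ l
          = ∑ l : ↥Tᶜ, c ⟨j, hj⟩ l * M l.1 i := by
            refine Finset.sum_congr rfl fun l _ => ?_
            rw [hsym.apply l.1 i]
            ring
        _ = M j i := (hc ⟨j, hj⟩ i).symm
        _ = M i j := hsym.apply i j
    · rw [dif_neg hj]
      rfl
lemma card_low_rank_le (n s : ℕ) (hs : s ≤ n) :
    Nat.card {M : Matrix (Fin n) (Fin n) (ZMod 2) //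
        M.IsSymm ∧ (M.rank : ℤ) ≤ (n : ℤ) - (s : ℤ)} ≤
      n.choose s * (2 ^ (s * (n - s)) * 2 ^ ((n - s) * ((n - s) + 1) / 2)) := by
  classical
  set D := Σ T : {T : Finset (Fin n) // T.card = s},
    (↥T.1 → ↥(T.1ᶜ) → ZMod 2) × {A : Matrix ↥(T.1ᶜ) ↥(T.1ᶜ) (ZMod 2) // A.IsSymm} with hD
  have hsurj : ∀ M : {M : Matrix (Fin n) (Fin n) (ZMod 2) //
      M.IsSymm ∧ (M.rank : ℤ) ≤ (n : ℤ) - (s : ℤ)},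
      ∃ d : D, recon d.1.1 d.2.1 d.2.2.1 = M.1 := by
    rintro ⟨M, hsym, hrank⟩
    have hrank' : M.rank ≤ n - s := by omega
    obtain ⟨T, hT, c, hc⟩ := exists_decomp n s hs M hsym hrank'
    refine ⟨⟨⟨T, hT⟩, c, ⟨Matrix.of fun k l : ↥Tᶜ => M k.1 l.1, ?_⟩⟩, ?_⟩
    · apply Matrix.IsSymm.ext
      intro k l
      exact hsym.apply k.1 l.1
    · exact recon_eq M hsym T c hc
  have hle : Nat.card {M : Matrix (Fin n) (Fin n) (ZMod 2) //
      M.IsSymm ∧ (M.rank : ℤ) ≤ (n : ℤ) - (s : ℤ)} ≤ Nat.card D := by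
    refine Nat.card_le_card_of_injective (fun M => Classical.choose (hsurj M)) ?_
    intro M₁ M₂ h
    apply Subtype.ext
    rw [← Classical.choose_spec (hsurj M₁), ← Classical.choose_spec (hsurj M₂)]
    exact congrArg (fun d : D => recon d.1.1 d.2.1 d.2.2.1) h
  refine hle.trans ?_
  show Nat.card (Σ T : {T : Finset (Fin n) // T.card = s},
    (↥T.1 → ↥(T.1ᶜ) → ZMod 2) × {A : Matrix ↥(T.1ᶜ) ↥(T.1ᶜ) (ZMod 2) // A.IsSymm}) ≤ _
  rw [Nat.card_eq_fintype_card, Fintype.card_sigma]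
  have hfib : ∀ T : {T : Finset (Fin n) // T.card = s},
      Fintype.card ((↥T.1 → ↥(T.1ᶜ) → ZMod 2) ×
        {A : Matrix ↥(T.1ᶜ) ↥(T.1ᶜ) (ZMod 2) // A.IsSymm})
        = 2 ^ (s * (n - s)) * 2 ^ ((n - s) * ((n - s) + 1) / 2) := by
    intro T
    have hTc : Fintype.card ↥(T.1ᶜ) = n - s := by
      rw [Fintype.card_coe, Finset.card_compl, T.2, Fintype.card_fin]
    rw [Fintype.card_prod, Fintype.card_fun, Fintype.card_fun, ZMod.card, hTc,
      Fintype.card_coe, T.2, ← pow_mul, ← Nat.card_eq_fintype_card, card_symm, hTc,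
      Nat.mul_comm (n - s) s]
  rw [Finset.sum_congr rfl (fun T _ => hfib T), Finset.sum_const, smul_eq_mul]
  rw [Finset.card_univ, Fintype.card_finset_len, Fintype.card_fin]

theorem prob_symm_matrix_low_rank (n s : ℕ) :
    ((Nat.card {M : Matrix (Fin n) (Fin n) (ZMod 2) //
        M.IsSymm ∧ (M.rank : ℤ) ≤ (n : ℤ) - (s : ℤ)}) : ℝ) /
      ((Nat.card {M : Matrix (Fin n) (Fin n) (ZMod 2) // M.IsSymm}) : ℝ) ≤
    (2 : ℝ) ^ ((s : ℝ) * Real.logb 2 n - (s : ℝ) * ((s : ℝ) - 1) / 2) := by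
  have hden : Nat.card {M : Matrix (Fin n) (Fin n) (ZMod 2) // M.IsSymm}
      = 2 ^ (n * (n + 1) / 2) := by
    rw [card_symm (Fin n), Fintype.card_fin]
  have hdpos : (0:ℝ) < ((Nat.card {M : Matrix (Fin n) (Fin n) (ZMod 2) // M.IsSymm}) : ℝ) := by
    rw [hden]
    positivity
  rcases Nat.eq_zero_or_pos s with hs0 | hs1
  · subst hs0
    have hR : ((0:ℕ) : ℝ) * Real.logb 2 n - ((0:ℕ):ℝ) * (((0:ℕ):ℝ) - 1) / 2 = 0 := by
      norm_num
    rw [hR, Real.rpow_zero]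
    rw [div_le_one hdpos]
    have : Nat.card {M : Matrix (Fin n) (Fin n) (ZMod 2) //
        M.IsSymm ∧ (M.rank : ℤ) ≤ (n : ℤ) - ((0:ℕ) : ℤ)}
        ≤ Nat.card {M : Matrix (Fin n) (Fin n) (ZMod 2) // M.IsSymm} := by
      refine Nat.card_le_card_of_injective (fun M => ⟨M.1, M.2.1⟩) ?_
      intro M₁ M₂ h
      exact Subtype.ext (congrArg (fun x : {M : Matrix (Fin n) (Fin n) (ZMod 2) // M.IsSymm} => x.val) h)
    exact_mod_cast this
  by_cases hsn : s ≤ n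
  · -- main case : 1 ≤ s ≤ n
    have hn1 : 1 ≤ n := le_trans hs1 hsn
    set q : ℕ := n - s with hq
    set e : ℕ := s * (s - 1) / 2 with he
    have h2e : 2 * e = s * (s - 1) := by
      rw [he]
      refine Nat.mul_div_cancel' ?_
      have : Even ((s-1) * ((s-1)+1)) := Nat.even_mul_succ_self _
      have hss : (s-1)+1 = s := by omega
      rw [hss] at this
      rw [Nat.mul_comm]
      exact this.two_dvd
    have hecast : ((e : ℕ) : ℝ) = (s:ℝ) * ((s:ℝ) - 1) / 2 := by
      have h2 : (2:ℝ) * (e:ℝ) = (s:ℝ) * ((s:ℝ) - 1) := by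
        have := congrArg (fun x : ℕ => (x : ℝ)) h2e
        push_cast [hs1] at this
        convert this using 2
      linarith
    have hrhs : (2 : ℝ) ^ ((s : ℝ) * Real.logb 2 n - (s : ℝ) * ((s : ℝ) - 1) / 2)
        = (n:ℝ)^(s:ℕ) / (2:ℝ)^(e:ℕ) := by
      rw [Real.rpow_sub (by norm_num)]
      congr 1
      · rw [mul_comm, Real.rpow_mul (by norm_num), Real.rpow_logb (by norm_num) (by norm_num)
          (by exact_mod_cast hn1), Real.rpow_natCast]
      · rw [← hecast, Real.rpow_natCast]
    rw [hrhs, div_le_div_iff₀ hdpos (by positivity), hden]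
    have hnat : Nat.card {M : Matrix (Fin n) (Fin n) (ZMod 2) //
          M.IsSymm ∧ (M.rank : ℤ) ≤ (n : ℤ) - (s : ℤ)} * 2 ^ e
        ≤ n ^ s * 2 ^ (n * (n + 1) / 2) := by
      have h1 := card_low_rank_le n s hsn
      have hch : n.choose s ≤ n ^ s :=
        (Nat.choose_le_descFactorial n s).trans (Nat.descFactorial_le_pow n s)
      have ha : 2 * (q * (q + 1) / 2) = q * (q + 1) :=
        Nat.mul_div_cancel' (Nat.even_mul_succ_self q).two_dvd
      have hc2 : 2 * (n * (n + 1) / 2) = n * (n + 1) :=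
        Nat.mul_div_cancel' (Nat.even_mul_succ_self n).two_dvd
      have hexp : s * q + q * (q + 1) / 2 + e ≤ n * (n + 1) / 2 := by
        have h2 : 2 * (s * q + q * (q + 1) / 2 + e) ≤ 2 * (n * (n + 1) / 2) := by
          rw [Nat.mul_add, Nat.mul_add, ha, hc2, h2e]
          have hqs : n = q + s := by omega
          have hb : s * (s - 1) ≤ s * s := Nat.mul_le_mul_left s (by omega)
          have hfin : 2 * (s * q) + q * (q + 1) + s * s ≤ n * (n + 1) := by
            rw [hqs]
            nlinarith
          omega
        exact Nat.le_of_mul_le_mul_left h2 (by norm_num)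
      calc Nat.card {M : Matrix (Fin n) (Fin n) (ZMod 2) //
            M.IsSymm ∧ (M.rank : ℤ) ≤ (n : ℤ) - (s : ℤ)} * 2 ^ e
          ≤ (n ^ s * (2 ^ (s * q) * 2 ^ (q * (q + 1) / 2))) * 2 ^ e := by
            refine Nat.mul_le_mul_right _ (h1.trans ?_)
            exact Nat.mul_le_mul_right _ hch
        _ = n ^ s * 2 ^ (s * q + q * (q + 1) / 2 + e) := by
            rw [pow_add, pow_add]
            ring
        _ ≤ n ^ s * 2 ^ (n * (n + 1) / 2) := by
            exact Nat.mul_le_mul_left _ (Nat.pow_le_pow_right (by norm_num) hexp)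
    exact_mod_cast hnat
  · -- s > n : numerator set is empty
    have hemp : IsEmpty {M : Matrix (Fin n) (Fin n) (ZMod 2) //
        M.IsSymm ∧ (M.rank : ℤ) ≤ (n : ℤ) - (s : ℤ)} := by
      refine ⟨fun M => ?_⟩
      have := M.2.2
      have h0 : (0:ℤ) ≤ (M.1.rank : ℤ) := Int.natCast_nonneg _
      omega
    rw [Nat.card_of_isEmpty, Nat.cast_zero, zero_div]
    positivity
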